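/- Let φ be a context formula for c with respect to 𝕊, and let A := {W : V → Bool | W satisfies φ}. If every PMF ν on worlds that is stationary for T satisfies ν(A) > 0, then the probability of eventually observing c is 1, i.e., lim_{t→∞} P_K(c[1:t]) = 1. -/

import Mathlib

open scoped ENNReal

namespace DBL

variable {I A C V : Type*}

/-- A world `W` satisfies the context `κ` if it agrees with `κ` wherever it is defined. -/
def SatCtx (W : V → Bool) (κ : V → Option Bool) : Prop :=
  ∀ v b, κ v = some b → W v = b

/-- The ontology induced by the world `W` from the `V`-ontology `𝕊`. -/
def OW (𝕊 : Finset (A × (V → Option Bool))) (W : V → Bool) : Set A :=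
  {α | ∃ κ, (α, κ) ∈ 𝕊 ∧ SatCtx W κ}

/-- `i` is a model of the ontology `O`. -/
def IsOntModel (satA : I → A → Prop) (O : Set A) (i : I) : Prop :=
  ∀ α ∈ O, satA i α

/-- The ontology `O` entails the consequence `c`. -/
def Entails (satA : I → A → Prop) (satC : I → C → Prop) (O : Set A) (c : C) : Prop :=
  ∀ i : I, IsOntModel satA O i → satC i c

/-- The `t`-step path distribution of the Markov chain with initial distribution `μ` and
transition kernel `T`: `π_t(W) = μ(W 0) · ∏_{i < t-1} T(W i)(W (i+1))`. -/
noncomputable def pathProb {S : Type*} (μ : PMF S) (T : S → PMF S)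
    (t : ℕ) (W : Fin t → S) : ℝ≥0∞ :=
  if h : 0 < t then
    μ (W ⟨0, h⟩) * ∏ i : Fin (t - 1),
      T (W ⟨(i : ℕ), by have := i.2; omega⟩) (W ⟨(i : ℕ) + 1, by have := i.2; omega⟩)
  else 1

/-- A `t`-step probabilistic interpretation `q` (a finitely supported PMF on pairs of a
tuple of interpretations and a path of worlds) is a `t`-step model of `((μ, T), 𝕊)`. -/
def IsStepModel (satA : I → A → Prop) (μ : PMF (V → Bool))
    (T : (V → Bool) → PMF (V → Bool)) (𝕊 : Finset (A × (V → Option Bool))) (t : ℕ)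
    (q : PMF ((Fin t → I) × (Fin t → (V → Bool)))) : Prop :=
  q.support.Finite ∧
    (∀ iw ∈ q.support, ∀ s : Fin t, IsOntModel satA (OW 𝕊 (iw.2 s)) (iw.1 s)) ∧
    ∀ W : Fin t → (V → Bool), ∑' i : Fin t → I, q (i, W) = pathProb μ T t W

/-- `P_q(c[1:t])`: the `q`-probability that `c` is observed at some step `s < t`. -/
noncomputable def Pqt (satC : I → C → Prop) (t : ℕ)
    (q : PMF ((Fin t → I) × (Fin t → (V → Bool)))) (c : C) : ℝ≥0∞ :=
  ∑' iw : (Fin t → I) × (Fin t → (V → Bool)),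
    {x : (Fin t → I) × (Fin t → (V → Bool)) | ∃ s : Fin t, satC (x.1 s) c}.indicator (⇑q) iw

/-- `P_K(c[1:t])`: the infimum of `P_q(c[1:t])` over all `t`-step models `q` of the KB. -/
noncomputable def PKbound (satA : I → A → Prop) (satC : I → C → Prop)
    (μ : PMF (V → Bool)) (T : (V → Bool) → PMF (V → Bool))
    (𝕊 : Finset (A × (V → Option Bool))) (c : C) (t : ℕ) : ℝ≥0∞ :=
  sInf {x : ℝ≥0∞ | ∃ q : PMF ((Fin t → I) × (Fin t → (V → Bool))),
    IsStepModel satA μ T 𝕊 t q ∧ x = Pqt satC t q c}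

/-- A PMF `ν` on worlds is stationary for the kernel `T`. -/
def Stationary {S : Type*} (T : S → PMF S) (ν : PMF S) : Prop :=
  ∀ s' : S, ∑' s : S, ν s * T s s' = ν s'


/-! ### Auxiliary development -/

open scoped Classical

section Aux

variable {S : Type*} [Fintype S] (T : S → PMF S) (d : S → Prop)

/-- Probability of staying `t` steps inside `{s | d s}`, as a function of the start state. -/
noncomputable def stepF (T : S → PMF S) (d : S → Prop) : ℕ → S → ℝ≥0∞
  | 0 => fun s => if d s then 1 else 0
  | (n+1) => fun s => if d s then ∑ s', T s s' * stepF T d n s' else 0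

lemma sumT (s : S) : ∑ s', T s s' = 1 := by
  rw [← tsum_fintype (L := SummationFilter.unconditional _)]; exact (T s).tsum_coe

lemma stepF_le_one : ∀ n s, stepF T d n s ≤ 1 := by
  intro n
  induction n with
  | zero => intro s; simp [stepF]; split <;> simp
  | succ n ih =>
    intro s
    simp only [stepF]
    split
    · calc ∑ s', T s s' * stepF T d n s' ≤ ∑ s', T s s' * 1 := by
            exact Finset.sum_le_sum fun s' _ => mul_le_mul_right (ih s') _
        _ = 1 := by simpa using sumT T s
    · exact zero_le_one

lemma stepF_antitone (s : S) : Antitone fun n => stepF T d n s := by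
  have key : ∀ n s, stepF T d (n+1) s ≤ stepF T d n s := by
    intro n
    induction n with
    | zero =>
      intro s; simp only [stepF]; split
      · calc ∑ s', T s s' * stepF T d 0 s' ≤ ∑ s', T s s' * 1 :=
              Finset.sum_le_sum fun s' _ => mul_le_mul_right (stepF_le_one T d 0 s') _
          _ = 1 := by simpa using sumT T s
      · exact le_rfl
    | succ n ih =>
      intro s; simp only [stepF]; split
      · exact Finset.sum_le_sum fun s' _ => mul_le_mul_right (ih s') _
      · exact le_rfl
  exact antitone_nat_of_succ_le fun n => key n s

/-- Limiting probability of staying in `{s | d s}` forever. -/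
noncomputable def limF (s : S) : ℝ≥0∞ := ⨅ n, stepF T d n s

lemma tendsto_stepF (s : S) :
    Filter.Tendsto (fun n => stepF T d n s) Filter.atTop (nhds (limF T d s)) :=
  tendsto_atTop_iInf (stepF_antitone T d s)

lemma limF_le_one (s : S) : limF T d s ≤ 1 :=
  le_trans (iInf_le _ 0) (stepF_le_one T d 0 s)

lemma limF_rec (s : S) :
    limF T d s = if d s then ∑ s', T s s' * limF T d s' else 0 := by
  have h1 : Filter.Tendsto (fun n => stepF T d (n+1) s) Filter.atTop (nhds (limF T d s)) :=
    (tendsto_stepF T d s).comp (Filter.tendsto_add_atTop_nat 1)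
  have h2 : Filter.Tendsto (fun n => stepF T d (n+1) s) Filter.atTop
      (nhds (if d s then ∑ s', T s s' * limF T d s' else 0)) := by
    simp only [stepF]
    split
    · apply tendsto_finset_sum
      intro s' _
      exact ENNReal.Tendsto.const_mul (tendsto_stepF T d s') (Or.inr (PMF.apply_ne_top _ _))
    · exact tendsto_const_nhds
  exact tendsto_nhds_unique h1 h2

/-- The real transition matrix of `T`. -/
noncomputable def rmat (T : S → PMF S) (s s' : S) : ℝ := (T s s').toReal

lemma rmat_nonneg (s s' : S) : 0 ≤ rmat T s s' := ENNReal.toReal_nonneg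

lemma rmat_sum (s : S) : ∑ s', rmat T s s' = 1 := by
  have h : (∑ s', T s s').toReal = ∑ s', (T s s').toReal :=
    ENNReal.toReal_sum fun a _ => PMF.apply_ne_top _ _
  have h2 : ∑ s', T s s' = 1 := by rw [← tsum_fintype (L := SummationFilter.unconditional _)]; exact (T s).tsum_coe
  simp only [rmat]; rw [← h, h2]; simp

/-- Iterates of a starting vector under the transition matrix. -/
noncomputable def iter (T : S → PMF S) (x : S → ℝ) : ℕ → S → ℝ
  | 0 => x
  | (n+1) => fun s' => ∑ s, iter T x n s * rmat T s s'

/-- From a closed set `B` (with a point in it) we build a stationary PMF supported in `B`. -/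
lemma exists_stationary_supported (B : Set S) (s₀ : S) (hs₀ : s₀ ∈ B)
    (hB : ∀ s ∈ B, ∀ s', T s s' ≠ 0 → s' ∈ B) :
    ∃ ν : PMF S, Stationary T ν ∧ ∀ s, s ∉ B → ν s = 0 := by
  set x : S → ℝ := fun s => if s = s₀ then 1 else 0 with hx
  set p : ℕ → S → ℝ := iter T x with hp
  have hnn : ∀ n s, 0 ≤ p n s := by
    intro n
    induction n with
    | zero => intro s; simp [hp, iter, hx]; split <;> norm_num
    | succ n ih =>
      intro s
      exact Finset.sum_nonneg fun s' _ => mul_nonneg (ih s') (rmat_nonneg T s' s)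
  have hsum : ∀ n, ∑ s, p n s = 1 := by
    intro n
    induction n with
    | zero => simp [hp, iter, hx]
    | succ n ih =>
      calc ∑ s', ∑ s, p n s * rmat T s s' = ∑ s, ∑ s', p n s * rmat T s s' :=
            Finset.sum_comm
        _ = ∑ s, p n s * 1 := by
            refine Finset.sum_congr rfl fun s _ => ?_
            rw [← Finset.mul_sum, rmat_sum]
        _ = 1 := by simpa using ih
  have hle : ∀ n s, p n s ≤ 1 := by
    intro n s
    calc p n s ≤ ∑ s', p n s' := Finset.single_le_sum (fun s' _ => hnn n s') (Finset.mem_univ s)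
      _ = 1 := hsum n
  have hsupp : ∀ n s, s ∉ B → p n s = 0 := by
    intro n
    induction n with
    | zero => intro s hs; simp only [hp, iter, hx]
              split
              · next h => exact absurd (h ▸ hs₀) (h ▸ hs)
              · rfl
    | succ n ih =>
      intro s' hs'
      apply Finset.sum_eq_zero
      intro s _
      by_cases hsB : s ∈ B
      · by_cases hr : rmat T s s' = 0
        · rw [hr, mul_zero]
        · exfalso
          have : T s s' ≠ 0 := fun h => hr (by simp [rmat, h])
          exact hs' (hB s hsB s' this)
      · have h0 : iter T x n s = 0 := ih s hsB
        rw [h0, zero_mul]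
  -- Cesàro averages
  set cz : ℕ → S → ℝ := fun N s => (∑ k ∈ Finset.range (N+1), p k s) / (N+1) with hcz
  have hcnn : ∀ N s, 0 ≤ cz N s := fun N s =>
    div_nonneg (Finset.sum_nonneg fun k _ => hnn k s) (by positivity)
  have hcle : ∀ N s, cz N s ≤ 1 := by
    intro N s
    rw [hcz, div_le_one (by positivity)]
    calc ∑ k ∈ Finset.range (N+1), p k s ≤ ∑ k ∈ Finset.range (N+1), 1 :=
          Finset.sum_le_sum fun k _ => hle k s
      _ = (N+1 : ℝ) := by simp
  have hcsum : ∀ N, ∑ s, cz N s = 1 := by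
    intro N
    simp only [hcz, ← Finset.sum_div]
    rw [Finset.sum_comm]
    rw [Finset.sum_congr rfl fun k (_ : k ∈ Finset.range (N+1)) => hsum k]
    rw [Finset.sum_const, Finset.card_range, nsmul_eq_mul]
    push_cast
    rw [mul_one, div_self (by positivity : ((N:ℝ)+1) ≠ 0)]
  have hcsupp : ∀ N s, s ∉ B → cz N s = 0 := by
    intro N s hs
    simp only [hcz]
    rw [Finset.sum_congr rfl fun k _ => hsupp k s hs]
    simp
  -- drift
  have hdrift : ∀ N s', ∑ s, cz N s * rmat T s s' - cz N s'
      = (p (N+1) s' - p 0 s') / (N+1) := by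
    intro N s'
    have h1 : ∑ s, cz N s * rmat T s s'
        = (∑ k ∈ Finset.range (N+1), p (k+1) s') / (N+1) := by
      have hterm : ∀ s, cz N s * rmat T s s'
          = (∑ k ∈ Finset.range (N+1), p k s * rmat T s s') / (N+1) := by
        intro s
        simp only [hcz]
        rw [div_mul_eq_mul_div, Finset.sum_mul]
      rw [Finset.sum_congr rfl fun s _ => hterm s, ← Finset.sum_div]
      congr 1
      rw [Finset.sum_comm]
      exact Finset.sum_congr rfl fun k _ => rfl
    have h2 : ∑ k ∈ Finset.range (N+1), p (k+1) s'
        = ∑ k ∈ Finset.range (N+1), p k s' + p (N+1) s' - p 0 s' := by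
      have e1 := Finset.sum_range_succ' (fun k => p k s') (N+1)
      have e2 := Finset.sum_range_succ (fun k => p k s') (N+1)
      linarith
    rw [h1, h2, hcz]
    field_simp
    ring
  -- compactness
  have hK : IsCompact (Set.Icc (0 : S → ℝ) 1) := isCompact_Icc
  have hmem : ∀ N, cz N ∈ Set.Icc (0 : S → ℝ) 1 := by
    intro N
    constructor <;> intro s
    · exact hcnn N s
    · exact hcle N s
  obtain ⟨ν₀, hν₀K, ψ, hψ, hconv⟩ := hK.tendsto_subseq hmem
  have hcoord : ∀ s, Filter.Tendsto (fun n => cz (ψ n) s) Filter.atTop (nhds (ν₀ s)) :=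
    fun s => ((continuous_apply s).continuousAt.tendsto).comp hconv
  have hν₀nn : ∀ s, 0 ≤ ν₀ s := fun s => hν₀K.1 s
  have hν₀sum : ∑ s, ν₀ s = 1 := by
    have h1 : Filter.Tendsto (fun n => ∑ s, cz (ψ n) s) Filter.atTop (nhds (∑ s, ν₀ s)) :=
      tendsto_finset_sum _ fun s _ => hcoord s
    have h2 : Filter.Tendsto (fun n => ∑ s, cz (ψ n) s) Filter.atTop (nhds 1) := by
      simp only [hcsum]; exact tendsto_const_nhds
    exact tendsto_nhds_unique h1 h2
  have hν₀supp : ∀ s, s ∉ B → ν₀ s = 0 := by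
    intro s hs
    have h1 : Filter.Tendsto (fun n => cz (ψ n) s) Filter.atTop (nhds 0) := by
      simp only [fun n => hcsupp (ψ n) s hs]; exact tendsto_const_nhds
    exact tendsto_nhds_unique (hcoord s) h1
  have hν₀stat : ∀ s', ∑ s, ν₀ s * rmat T s s' = ν₀ s' := by
    intro s'
    have h1 : Filter.Tendsto (fun n => ∑ s, cz (ψ n) s * rmat T s s' - cz (ψ n) s')
        Filter.atTop (nhds (∑ s, ν₀ s * rmat T s s' - ν₀ s')) :=
      Filter.Tendsto.sub (tendsto_finset_sum _ fun s _ => (hcoord s).mul_const _) (hcoord s')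
    have h2 : Filter.Tendsto (fun n => ∑ s, cz (ψ n) s * rmat T s s' - cz (ψ n) s')
        Filter.atTop (nhds 0) := by
      have hbound : ∀ n : ℕ, ‖∑ s, cz (ψ n) s * rmat T s s' - cz (ψ n) s'‖ ≤ 2 / (n+1 : ℝ) := by
        intro n
        rw [hdrift (ψ n) s']
        have hb : |p (ψ n + 1) s' - p 0 s'| ≤ 2 := by
          have := hnn (ψ n + 1) s'; have := hle (ψ n + 1) s'
          have := hnn 0 s'; have := hle 0 s'
          rw [abs_le]; constructor <;> linarith
        have hψn : (n : ℝ) + 1 ≤ (ψ n : ℝ) + 1 := by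
          have h : (n : ℝ) ≤ (ψ n : ℝ) := by exact_mod_cast hψ.le_apply (x := n)
          linarith
        rw [Real.norm_eq_abs, abs_div, abs_of_nonneg (by positivity : (0:ℝ) ≤ (ψ n : ℝ) + 1)]
        calc |p (ψ n + 1) s' - p 0 s'| / ((ψ n : ℝ) + 1) ≤ 2 / ((ψ n : ℝ) + 1) := by
              apply div_le_div_of_nonneg_right hb (by positivity) |>.trans le_rfl
          _ ≤ 2 / ((n : ℝ) + 1) := by
              apply div_le_div_of_nonneg_left (by norm_num) (by positivity) hψn
      have htend : Filter.Tendsto (fun n : ℕ => 2 / (n+1 : ℝ)) Filter.atTop (nhds 0) := by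
        have := tendsto_one_div_add_atTop_nhds_zero_nat (𝕜 := ℝ)
        have h3 : Filter.Tendsto (fun n : ℕ => 2 * (1 / (n + 1 : ℝ))) Filter.atTop
            (nhds (2 * 0)) := this.const_mul 2
        simpa [div_eq_mul_inv] using h3
      exact squeeze_zero_norm hbound htend
    have := tendsto_nhds_unique h1 h2
    linarith [this]
  -- build the PMF
  have hofsum : ∑ s, ENNReal.ofReal (ν₀ s) = 1 := by
    rw [← ENNReal.ofReal_sum_of_nonneg fun s _ => hν₀nn s, hν₀sum, ENNReal.ofReal_one]
  refine ⟨PMF.ofFintype (fun s => ENNReal.ofReal (ν₀ s)) hofsum, ?_, ?_⟩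
  · intro s'
    rw [tsum_fintype]
    have : ∀ s, (PMF.ofFintype (fun s => ENNReal.ofReal (ν₀ s)) hofsum) s
        * T s s' = ENNReal.ofReal (ν₀ s * rmat T s s') := by
      intro s
      rw [PMF.ofFintype_apply, ENNReal.ofReal_mul (hν₀nn s)]
      congr 1
      rw [rmat, ENNReal.ofReal_toReal (PMF.apply_ne_top _ _)]
    rw [Finset.sum_congr rfl fun s _ => this s,
      ← ENNReal.ofReal_sum_of_nonneg fun s _ => mul_nonneg (hν₀nn s) (rmat_nonneg T s s'),
      hν₀stat s', PMF.ofFintype_apply]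
  · intro s hs
    rw [PMF.ofFintype_apply, hν₀supp s hs, ENNReal.ofReal_zero]

lemma limF_eq_zero (hst : ∀ ν : PMF S, Stationary T ν → ∃ s, ¬ d s ∧ ν s ≠ 0) :
    ∀ s, limF T d s = 0 := by
  by_contra hcon
  push_neg at hcon
  obtain ⟨s₀, hs₀⟩ := hcon
  set G : S → ℝ := fun s => (limF T d s).toReal with hG
  have hfin : ∀ s, limF T d s ≠ ⊤ :=
    fun s => ((limF_le_one T d s).trans_lt (by norm_num)).ne
  have hGrec : ∀ s, d s → G s = ∑ s', rmat T s s' * G s' := by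
    intro s hds
    have h0 := limF_rec T d s
    rw [if_pos hds] at h0
    have h2 : (limF T d s).toReal = (∑ s', T s s' * limF T d s').toReal := by rw [← h0]
    simp only [hG]
    rw [h2, ENNReal.toReal_sum (fun s' _ => ENNReal.mul_ne_top (PMF.apply_ne_top _ _) (hfin s'))]
    exact Finset.sum_congr rfl fun s' _ => ENNReal.toReal_mul
  have hGzero : ∀ s, ¬ d s → G s = 0 := by
    intro s hds
    have h0 := limF_rec T d s
    rw [if_neg hds] at h0
    simp [hG, h0]
  obtain ⟨smax, -, hmax⟩ := Finset.exists_max_image Finset.univ G ⟨s₀, Finset.mem_univ s₀⟩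
  have hmax' : ∀ s, G s ≤ G smax := fun s => hmax s (Finset.mem_univ s)
  set M : ℝ := G smax with hM
  have hMpos : 0 < M := by
    have h1 : 0 < G s₀ := ENNReal.toReal_pos hs₀ (hfin s₀)
    exact h1.trans_le (hmax' s₀)
  set B : Set S := {s | G s = M} with hBdef
  have hsmaxB : smax ∈ B := rfl
  have hBd : ∀ s ∈ B, d s := by
    intro s hs
    by_contra hds
    have := hGzero s hds
    rw [hBdef] at hs
    simp only [Set.mem_setOf_eq] at hs
    rw [this] at hs
    linarith
  have hBclosed : ∀ s ∈ B, ∀ s', T s s' ≠ 0 → s' ∈ B := by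
    intro s hs s' hT
    have hds := hBd s hs
    have hsM : G s = M := hs
    have hzero : ∑ x, rmat T s x * (M - G x) = 0 := by
      simp only [mul_sub, Finset.sum_sub_distrib, ← Finset.sum_mul]
      rw [rmat_sum T s, ← hGrec s hds, hsM]
      ring
    have hterm := (Finset.sum_eq_zero_iff_of_nonneg
      (fun x (_ : x ∈ Finset.univ) => mul_nonneg (rmat_nonneg T s x)
        (by linarith [hmax' x] : (0:ℝ) ≤ M - G x))).mp hzero s' (Finset.mem_univ s')
    have hr : 0 < rmat T s s' := ENNReal.toReal_pos hT (PMF.apply_ne_top _ _)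
    have : M - G s' = 0 := by
      rcases mul_eq_zero.mp hterm with h | h
      · exact absurd h hr.ne'
      · exact h
    show G s' = M
    linarith
  obtain ⟨ν, hνstat, hνsupp⟩ := exists_stationary_supported T B smax hsmaxB hBclosed
  obtain ⟨s, hds, hνs⟩ := hst ν hνstat
  by_cases hsB : s ∈ B
  · exact hds (hBd s hsB)
  · exact hνs (hνsupp s hsB)

lemma pathProb_pos' {S₀ : Type*} (T : S₀ → PMF S₀) (ρ : PMF S₀) (n : ℕ) (W : Fin (n+1) → S₀) :
    pathProb ρ T (n+1) W = ρ (W 0) * ∏ i : Fin n, T (W i.castSucc) (W i.succ) := by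
  simp only [pathProb, dif_pos (Nat.succ_pos n)]
  rfl

lemma pathProb_one' {S₀ : Type*} (T : S₀ → PMF S₀) (ρ : PMF S₀) (W : Fin 1 → S₀) :
    pathProb ρ T 1 W = ρ (W 0) := by
  simp [pathProb_pos']

lemma pathProb_cons' {S₀ : Type*} (T : S₀ → PMF S₀) (ρ : PMF S₀) (n : ℕ) (s : S₀)
    (p : Fin (n+1) → S₀) :
    pathProb ρ T (n+2) (Fin.cons s p) = ρ s * pathProb (T s) T (n+1) p := by
  rw [pathProb_pos', pathProb_pos', Fin.prod_univ_succ]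
  simp only [Fin.cons_zero, Fin.castSucc_zero, Fin.cons_succ, ← Fin.succ_castSucc]

/-- Probability of staying inside `{s | d s}` along a `t`-step path. -/
noncomputable def so (T : S → PMF S) (d : S → Prop) (ρ : PMF S) (t : ℕ) : ℝ≥0∞ :=
  ∑ W : Fin t → S, if (∀ k, d (W k)) then pathProb ρ T t W else 0

lemma sum_cons_decomp {M : Type*} [AddCommMonoid M] (n : ℕ) (F : (Fin (n+2) → S) → M) :
    ∑ W : Fin (n+2) → S, F W = ∑ s : S, ∑ p : Fin (n+1) → S, F (Fin.cons s p) := by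
  calc ∑ W : Fin (n+2) → S, F W
      = ∑ sp : S × (Fin (n+1) → S), F (Fin.cons sp.1 sp.2) :=
        (Fintype.sum_equiv (Fin.consEquiv fun _ => S) _ _ fun sp => rfl).symm
    _ = ∑ s : S, ∑ p : Fin (n+1) → S, F (Fin.cons s p) := Fintype.sum_prod_type _

lemma sum_fun_one {M : Type*} [AddCommMonoid M] (F : (Fin 1 → S) → M) :
    ∑ W : Fin 1 → S, F W = ∑ s : S, F (fun _ => s) := by
  refine Fintype.sum_equiv (Equiv.funUnique (Fin 1) S) _ _ fun W => ?_
  congr 1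
  funext k
  have hk : k = default := Subsingleton.elim _ _
  rw [hk]
  rfl

lemma so_succ_succ (ρ : PMF S) (n : ℕ) :
    so T d ρ (n+2) = ∑ s, if d s then ρ s * so T d (T s) (n+1) else 0 := by
  rw [so, sum_cons_decomp]
  refine Finset.sum_congr rfl fun s _ => ?_
  by_cases hds : d s
  · rw [if_pos hds, so, Finset.mul_sum]
    refine Finset.sum_congr rfl fun p _ => ?_
    have hcond : (∀ k, d ((Fin.cons s p : Fin (n+2) → S) k)) ↔ (d s ∧ ∀ k, d (p k)) := by
      rw [Fin.forall_fin_succ]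
      simp [Fin.cons_zero, Fin.cons_succ]
    rw [pathProb_cons']
    by_cases hp : ∀ k, d (p k)
    · rw [if_pos (hcond.mpr ⟨hds, hp⟩), if_pos hp]
    · rw [if_neg (fun h => hp (hcond.mp h).2), if_neg hp, mul_zero]
  · rw [if_neg hds]
    apply Finset.sum_eq_zero
    intro p _
    rw [if_neg]
    intro h
    exact hds (by simpa using h 0)

lemma so_eq : ∀ (n : ℕ) (ρ : PMF S),
    so T d ρ (n+1) = ∑ s, ρ s * stepF T d n s := by
  intro n
  induction n with
  | zero =>
    intro ρ
    rw [so, sum_fun_one]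
    refine Finset.sum_congr rfl fun s _ => ?_
    simp only [stepF]
    rw [pathProb_one']
    have hc : (∀ _ : Fin (0+1), d s) ↔ d s := ⟨fun h => h 0, fun h _ => h⟩
    rw [if_congr hc rfl rfl]
    by_cases hds : d s
    · rw [if_pos hds, if_pos hds, mul_one]
    · rw [if_neg hds, if_neg hds, mul_zero]
  | succ n ih =>
    intro ρ
    rw [so_succ_succ]
    refine Finset.sum_congr rfl fun s _ => ?_
    simp only [stepF]
    by_cases hds : d s
    · rw [if_pos hds, if_pos hds, ih (T s)]
    · rw [if_neg hds, if_neg hds, mul_zero]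

lemma stepF_true (n : ℕ) (s : S) : stepF T (fun _ => True) n s = 1 := by
  induction n generalizing s with
  | zero => simp [stepF]
  | succ n ih =>
    simp only [stepF, if_pos trivial]
    rw [Finset.sum_congr rfl fun s' _ => by rw [ih s', mul_one]]
    rw [← tsum_fintype (L := SummationFilter.unconditional _)]
    exact (T s).tsum_coe

lemma sum_pmf_one (ρ : PMF S) : ∑ s, ρ s = 1 := by
  rw [← tsum_fintype (L := SummationFilter.unconditional _)]; exact ρ.tsum_coe

lemma totalMass (ρ : PMF S) : ∀ t, ∑ W : Fin t → S, pathProb ρ T t W = 1 := by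
  intro t
  match t with
  | 0 =>
    rw [Fintype.sum_unique]
    simp [pathProb]
  | (n+1) =>
    have h := so_eq T (fun _ => True) n ρ
    rw [so] at h
    simp only [if_pos (fun _ => trivial)] at h
    rw [h, Finset.sum_congr rfl fun s _ => by rw [stepF_true, mul_one]]
    exact sum_pmf_one ρ

/-- Probability that a `t`-step path visits `{s | φ₀ s}`. -/
noncomputable def hitMass (T : S → PMF S) (φ₀ : S → Prop) (μ : PMF S) (t : ℕ) : ℝ≥0∞ :=
  ∑ W : Fin t → S, if (∃ k, φ₀ (W k)) then pathProb μ T t W else 0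

end Aux

/-- if `φ` is a context formula for `c` w.r.t. `𝕊` and every stationary
distribution of `T` gives positive probability to `{W | φ W}`, then
`lim_{t→∞} P_K(c[1:t]) = 1`. -/
theorem eventually_observing_consequence [Fintype V]
    (satA : I → A → Prop) (satC : I → C → Prop)
    (μ : PMF (V → Bool)) (T : (V → Bool) → PMF (V → Bool))
    (𝕊 : Finset (A × (V → Option Bool))) (c : C)
    (φ : (V → Bool) → Prop)
    (hφ : ∀ W : V → Bool, Entails satA satC (OW 𝕊 W) c ↔ φ W)
    (hmod : ∀ W : V → Bool, ∃ i : I, IsOntModel satA (OW 𝕊 W) i)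
    (hstat : ∀ ν : PMF (V → Bool), Stationary T ν →
      0 < ∑' W : V → Bool, {W : V → Bool | φ W}.indicator (⇑ν) W) :
    Filter.Tendsto (fun t : ℕ => PKbound satA satC μ T 𝕊 c t)
      Filter.atTop (nhds 1) := by
  classical
  set d : (V → Bool) → Prop := fun W => ¬ φ W with hd
  -- Every stationary distribution charges `{W | φ W}`.
  have hstat' : ∀ ν : PMF (V → Bool), Stationary T ν → ∃ s, ¬ d s ∧ ν s ≠ 0 := by
    intro ν hν
    have h := hstat ν hν
    rw [tsum_fintype] at h
    by_contra hall
    push_neg at hall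
    have hz : ∀ s, {W : V → Bool | φ W}.indicator (⇑ν) s = 0 := by
      intro s
      by_cases hφs : φ s
      · rw [Set.indicator_of_mem (show s ∈ {W : V → Bool | φ W} from hφs)]
        exact hall s (by simp [hd, hφs])
      · exact Set.indicator_of_notMem hφs _
    rw [Finset.sum_congr rfl fun s _ => hz s] at h
    simp at h
  have hlim0 : ∀ s, limF T d s = 0 := limF_eq_zero T d hstat'
  have hstep0 : ∀ s, Filter.Tendsto (fun n => stepF T d n s) Filter.atTop (nhds 0) := by
    intro s
    have h := tendsto_stepF T d s
    rwa [hlim0 s] at h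
  have hso : Filter.Tendsto (fun t => so T d μ t) Filter.atTop (nhds 0) := by
    rw [← Filter.tendsto_add_atTop_iff_nat 1]
    have he : ∀ n : ℕ, so T d μ (n+1) = ∑ s, μ s * stepF T d n s := fun n => so_eq T d n μ
    simp only [he]
    have h2 : Filter.Tendsto (fun n => ∑ s, μ s * stepF T d n s) Filter.atTop
        (nhds (∑ s : V → Bool, μ s * 0)) :=
      tendsto_finset_sum _ fun s _ =>
        ENNReal.Tendsto.const_mul (hstep0 s) (Or.inr (PMF.apply_ne_top _ _))
    simpa using h2
  -- hit mass + stay-out mass = 1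
  have hms : ∀ t, hitMass T φ μ t + so T d μ t = 1 := by
    intro t
    rw [hitMass, so, ← Finset.sum_add_distrib]
    rw [show (1:ℝ≥0∞) = ∑ W : Fin t → (V → Bool), pathProb μ T t W from (totalMass T μ t).symm]
    refine Finset.sum_congr rfl fun W _ => ?_
    by_cases h : ∃ k, φ (W k)
    · rw [if_pos h, if_neg, add_zero]
      intro hallk
      obtain ⟨k, hk⟩ := h
      exact (hallk k) hk
    · rw [if_neg h, if_pos, zero_add]
      intro k hk
      exact h ⟨k, hk⟩
  have hsole : ∀ t, so T d μ t ≠ ⊤ := by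
    intro t
    have h1 : so T d μ t ≤ 1 := by
      rw [← hms t]; exact self_le_add_left _ _
    exact (h1.trans_lt ENNReal.one_lt_top).ne
  have hm_eq : ∀ t, hitMass T φ μ t = 1 - so T d μ t :=
    fun t => ENNReal.eq_sub_of_add_eq (hsole t) (hms t)
  have hmtend : Filter.Tendsto (fun t => hitMass T φ μ t) Filter.atTop (nhds 1) := by
    have h2 := ENNReal.Tendsto.sub (tendsto_const_nhds (x := (1:ℝ≥0∞)))
      hso (Or.inl ENNReal.one_ne_top)
    rw [tsub_zero] at h2
    exact h2.congr fun t => (hm_eq t).symm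
  -- The canonical t-step model
  have hpp : ∀ t, ∑ W : Fin t → (V → Bool), pathProb μ T t W = 1 := totalMass T μ
  let i₀ : (V → Bool) → I := fun W => (hmod W).choose
  have hi₀ : ∀ W, IsOntModel satA (OW 𝕊 W) (i₀ W) := fun W => (hmod W).choose_spec
  let pp : ∀ t, PMF (Fin t → (V → Bool)) := fun t => PMF.ofFintype (pathProb μ T t) (hpp t)
  let qq : ∀ t, PMF ((Fin t → I) × (Fin t → (V → Bool))) :=
    fun t => (pp t).map (fun W => (fun k => i₀ (W k), W))
  have hq_apply : ∀ t (i : Fin t → I) (W : Fin t → (V → Bool)),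
      qq t (i, W) = if i = (fun k => i₀ (W k)) then pathProb μ T t W else 0 := by
    intro t i W
    show ((pp t).map _) (i, W) = _
    rw [PMF.map_apply, tsum_eq_single W]
    · by_cases h : i = fun k => i₀ (W k)
      · rw [if_pos (by rw [h]), if_pos h]
        exact PMF.ofFintype_apply (hpp t) W
      · rw [if_neg, if_neg h]
        intro hc
        exact h (congrArg Prod.fst hc)
    · intro W' hW'
      rw [if_neg]
      intro hc
      exact hW' (congrArg Prod.snd hc).symm
  have hmarg : ∀ t (W : Fin t → (V → Bool)),
      ∑' i : Fin t → I, qq t (i, W) = pathProb μ T t W := by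
    intro t W
    simp only [hq_apply]
    exact tsum_ite_eq _ _
  have hqmodel : ∀ t, IsStepModel satA μ T 𝕊 t (qq t) := by
    intro t
    refine ⟨?_, ?_, hmarg t⟩
    · rw [show (qq t).support = _ from PMF.support_map _ _]
      exact Set.Finite.image _ (Set.toFinite _)
    · intro iw hiw s
      have hiw' : iw ∈ (fun W : Fin t → (V → Bool) => ((fun k => i₀ (W k)), W)) '' (pp t).support := by
        rw [← PMF.support_map]; exact hiw
      obtain ⟨W, -, rfl⟩ := hiw'
      exact hi₀ (W s)
  have hupper : ∀ t, PKbound satA satC μ T 𝕊 c t ≤ 1 := by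
    intro t
    refine le_trans (sInf_le ⟨qq t, hqmodel t, rfl⟩) ?_
    calc Pqt satC t (qq t) c
        ≤ ∑' iw, (qq t) iw :=
          ENNReal.tsum_le_tsum fun iw => Set.indicator_le_self' (fun x _ => zero_le) iw
      _ = 1 := (qq t).tsum_coe
  have hlower : ∀ t, hitMass T φ μ t ≤ PKbound satA satC μ T 𝕊 c t := by
    intro t
    refine le_sInf ?_
    rintro x ⟨q, hq, rfl⟩
    obtain ⟨-, hqmod, hqmarg⟩ := hq
    have hpt : ∀ iw : (Fin t → I) × (Fin t → (V → Bool)),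
        (if (∃ k, φ (iw.2 k)) then q iw else 0) ≤
          {x : (Fin t → I) × (Fin t → (V → Bool)) |
            ∃ s : Fin t, satC (x.1 s) c}.indicator (⇑q) iw := by
      intro iw
      by_cases h : ∃ k, φ (iw.2 k)
      · rw [if_pos h]
        by_cases hq0 : q iw = 0
        · rw [hq0]; exact zero_le
        · have hsupp : iw ∈ q.support := hq0
          obtain ⟨k, hk⟩ := h
          have hent : Entails satA satC (OW 𝕊 (iw.2 k)) c := (hφ (iw.2 k)).mpr hk
          have hsat : satC (iw.1 k) c := hent _ (hqmod iw hsupp k)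
          rw [Set.indicator_of_mem (show iw ∈ {x : (Fin t → I) × (Fin t → (V → Bool)) |
            ∃ s : Fin t, satC (x.1 s) c} from ⟨k, hsat⟩)]
      · rw [if_neg h]; exact zero_le
    refine le_trans ?_ (ENNReal.tsum_le_tsum hpt)
    rw [ENNReal.tsum_prod', ENNReal.tsum_comm, tsum_fintype]
    have hWin : ∀ W : Fin t → (V → Bool),
        (∑' i : Fin t → I, if (∃ k, φ (W k)) then q (i, W) else 0)
        = if (∃ k, φ (W k)) then pathProb μ T t W else 0 := by
      intro W
      by_cases h : ∃ k, φ (W k)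
      · simp only [if_pos h]; exact hqmarg W
      · simp only [if_neg h, tsum_zero]
    rw [hitMass]
    exact le_of_eq (Finset.sum_congr rfl fun W _ => (hWin W).symm)
  exact tendsto_of_tendsto_of_tendsto_of_le_of_le hmtend tendsto_const_nhds hlower hupper

end DBL
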